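/- Let E be a Hilbert B-module. The set Φ_E of equivalence classes [φ]_E of automorphisms φ of B admitting a φ-unitary on E (where φ ~ φ' iff they agree on B_E) forms a group under [φ]_E[φ']_E = [φ∘φ']_E, with identity [id_B]_E and inverse [φ]_E⁻¹ = [φ⁻¹]_E. -/

import Mathlib

open scoped RightActions InnerProductSpace

/-- The Hilbert C⋆-module class as it stood in the older Mathlib: a right module
(action of `Aᵐᵒᵖ`), inner product linear in the second variable. -/
class RightCStarModule (A E : Type*) [NonUnitalSemiring A] [StarRing A] [Module ℂ A]
    [AddCommGroup E] [Module ℂ E] [PartialOrder A] [SMul Aᵐᵒᵖ E] [Norm A] [Norm E]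
    extends Inner A E where
  inner_add_right {x y z : E} : Inner.inner A x (y + z) = Inner.inner A x y + Inner.inner A x z
  inner_self_nonneg {x : E} : 0 ≤ Inner.inner A x x
  inner_self {x : E} : Inner.inner A x x = 0 ↔ x = 0
  inner_op_smul_right {a : A} {x y : E} : Inner.inner A x (y <• a) = Inner.inner A x y * a
  inner_smul_right_complex {z : ℂ} {x y : E} : Inner.inner A x (z • y) = z • Inner.inner A x y
  star_inner (x y : E) : star (Inner.inner A x y) = Inner.inner A y x
  norm_eq_sqrt_norm_inner_self (x : E) : ‖x‖ = √‖Inner.inner A x x‖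

/-- A *-homomorphism `φ : B → C` is nondegenerate if the closed linear span of `φ(B)·C`
is all of `C`. -/
def Nondegenerate {B C : Type*} [NonUnitalCStarAlgebra B] [NonUnitalCStarAlgebra C]
    (φ : B →⋆ₙₐ[ℂ] C) : Prop :=
  closure (Submodule.span ℂ {c : C | ∃ b c₀, c = φ b * c₀} : Set C) = Set.univ

/-- The range ideal `B_E` of a Hilbert `B`-module `E`: the closed linear span of all
inner products `⟪x, y⟫`. -/
def rangeIdeal (B E : Type*) [NonUnitalCStarAlgebra B] [PartialOrder B] [StarOrderedRing B]
    [NormedAddCommGroup E] [NormedSpace ℂ E] [SMul Bᵐᵒᵖ E] [RightCStarModule B E] : Set B :=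
  closure (Submodule.span ℂ {b : B | ∃ x y : E, b = ⟪x, y⟫_B} : Set B)

variable {B C D E F G : Type*}
  [NonUnitalCStarAlgebra B] [PartialOrder B] [StarOrderedRing B]
  [NonUnitalCStarAlgebra C] [PartialOrder C] [StarOrderedRing C]
  [NonUnitalCStarAlgebra D] [PartialOrder D] [StarOrderedRing D]
  [NormedAddCommGroup E] [NormedSpace ℂ E] [SMul Bᵐᵒᵖ E] [RightCStarModule B E]
  [NormedAddCommGroup F] [NormedSpace ℂ F] [SMul Cᵐᵒᵖ F] [RightCStarModule C F]
  [NormedAddCommGroup G] [NormedSpace ℂ G] [SMul Dᵐᵒᵖ G] [RightCStarModule D G]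
/-- The automorphisms of B admitting a generalized unitary on E. -/
def HasGenUnitary (E : Type*) {B : Type*} [NonUnitalCStarAlgebra B] [PartialOrder B]
    [StarOrderedRing B] [NormedAddCommGroup E] [NormedSpace ℂ E] [SMul Bᵐᵒᵖ E]
    [RightCStarModule B E] (φ : B ≃⋆ₐ[ℂ] B) : Prop :=
  ∃ u : E → E, Function.Surjective u ∧ ∀ x y : E, ⟪u x, u y⟫_B = φ ⟪x, y⟫_B

lemma RightCStarModule.inner_sub_right' (x y z : E) :
    ⟪x, y - z⟫_B = ⟪x, y⟫_B - ⟪x, z⟫_B :=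
  map_sub (AddMonoidHom.mk' (fun w : E => ⟪x, w⟫_B)
    (fun a b => RightCStarModule.inner_add_right)) y z

lemma RightCStarModule.inner_sub_left' (x y z : E) :
    ⟪y - z, x⟫_B = ⟪y, x⟫_B - ⟪z, x⟫_B := by
  rw [← RightCStarModule.star_inner x, RightCStarModule.inner_sub_right', star_sub,
    RightCStarModule.star_inner, RightCStarModule.star_inner]


lemma inner_mem_rangeIdeal (x y : E) : ⟪x, y⟫_B ∈ rangeIdeal B E :=
  subset_closure (Submodule.subset_span ⟨x, y, rfl⟩)

lemma mapsTo_rangeIdeal (φ : B ≃⋆ₐ[ℂ] B) (hφ : HasGenUnitary E φ) :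
    Set.MapsTo ⇑φ (rangeIdeal B E) (rangeIdeal B E) := by
  obtain ⟨u, hu, hinner⟩ := hφ
  have hcont : Continuous ⇑φ :=
    (NonUnitalStarAlgHom.isometry φ (EquivLike.injective φ)).continuous
  have hspan : Set.MapsTo ⇑φ
      (Submodule.span ℂ {b : B | ∃ x y : E, b = ⟪x, y⟫_B} : Set B)
      (Submodule.span ℂ {b : B | ∃ x y : E, b = ⟪x, y⟫_B} : Set B) := by
    intro b hb
    induction hb using Submodule.span_induction with
    | mem b hb =>
      obtain ⟨x, y, rfl⟩ := hb
      exact Submodule.subset_span ⟨u x, u y, (hinner x y).symm⟩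
    | zero => simp
    | add a b _ _ ha hb => simpa [map_add] using Submodule.add_mem _ ha hb
    | smul c a _ ha => simpa [map_smul] using Submodule.smul_mem _ c ha
  exact hspan.closure hcont

lemma genUnitary_injective (φ : B ≃⋆ₐ[ℂ] B) {u : E → E}
    (hinner : ∀ x y : E, ⟪u x, u y⟫_B = φ ⟪x, y⟫_B) : Function.Injective u := by
  intro x y hxy
  have h1 : ⟪x, x⟫_B = ⟪x, y⟫_B := EquivLike.injective φ <| by
    rw [← hinner, ← hinner, hxy]
  have h2 : ⟪y, y⟫_B = ⟪x, y⟫_B := EquivLike.injective φ <| by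
    rw [← hinner, ← hinner, hxy]
  have h3 : ⟪y, x⟫_B = ⟪x, x⟫_B := by
    rw [← RightCStarModule.star_inner x y, ← h1, RightCStarModule.star_inner]
  have hz : ⟪x - y, x - y⟫_B = 0 := by
    rw [RightCStarModule.inner_sub_left', RightCStarModule.inner_sub_right',
      RightCStarModule.inner_sub_right', h2, h3, ← h1]
    abel
  exact sub_eq_zero.mp (RightCStarModule.inner_self.mp hz)

lemma hasGenUnitary_symm (φ : B ≃⋆ₐ[ℂ] B) (hφ : HasGenUnitary E φ) :
    HasGenUnitary E φ.symm := by
  obtain ⟨u, hu, hiu⟩ := hφ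
  let e := Equiv.ofBijective u ⟨genUnitary_injective φ hiu, hu⟩
  refine ⟨e.symm, e.symm.surjective, fun x y => ?_⟩
  apply EquivLike.injective φ
  rw [StarAlgEquiv.apply_symm_apply, ← hiu]
  have hx : u (e.symm x) = x := e.apply_symm_apply x
  have hy : u (e.symm y) = y := e.apply_symm_apply y
  rw [hx, hy]

/-- Φ_E is a group: the classes [φ]_E (automorphisms agreeing on the range ideal B_E) of
automorphisms admitting a φ-unitary on E are closed under the well-defined operations
[φ][φ'] = [φ ∘ φ'], contain the identity class, and are closed under the well-defined
inverse [φ]⁻¹ = [φ⁻¹]. -/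
theorem PhiE_group :
    -- identity: [id_B]_E belongs to Φ_E
    HasGenUnitary E (StarAlgEquiv.refl ℂ B : B ≃⋆ₐ[ℂ] B) ∧
    -- closure under composition
    (∀ φ φ' : B ≃⋆ₐ[ℂ] B, HasGenUnitary E φ → HasGenUnitary E φ' →
      HasGenUnitary E (φ'.trans φ)) ∧
    -- closure under inverse
    (∀ φ : B ≃⋆ₐ[ℂ] B, HasGenUnitary E φ → HasGenUnitary E φ.symm) ∧
    -- membership in Φ_E only depends on the class [φ]_E
    (∀ φ φ' : B ≃⋆ₐ[ℂ] B, HasGenUnitary E φ →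
      Set.EqOn (⇑φ) (⇑φ') (rangeIdeal B E) → HasGenUnitary E φ') ∧
    -- the product is well-defined on classes
    (∀ φ₁ φ₁' φ₂ φ₂' : B ≃⋆ₐ[ℂ] B, HasGenUnitary E φ₁ → HasGenUnitary E φ₂ →
      Set.EqOn (⇑φ₁) (⇑φ₁') (rangeIdeal B E) → Set.EqOn (⇑φ₂) (⇑φ₂') (rangeIdeal B E) →
      Set.EqOn (⇑(φ₂.trans φ₁)) (⇑(φ₂'.trans φ₁')) (rangeIdeal B E)) ∧
    -- the inverse is well-defined on classes
    (∀ φ φ' : B ≃⋆ₐ[ℂ] B, HasGenUnitary E φ → HasGenUnitary E φ' →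
      Set.EqOn (⇑φ) (⇑φ') (rangeIdeal B E) →
      Set.EqOn (⇑φ.symm) (⇑φ'.symm) (rangeIdeal B E)) := by

  refine ⟨⟨id, Function.surjective_id, fun x y => rfl⟩, ?_, ?_, ?_, ?_, ?_⟩
  · rintro φ φ' ⟨u, hu, hiu⟩ ⟨v, hv, hiv⟩
    exact ⟨u ∘ v, hu.comp hv, fun x y => by simp [hiu, hiv]⟩
  · exact fun φ hφ => hasGenUnitary_symm φ hφ
  · rintro φ φ' ⟨u, hu, hiu⟩ heq
    exact ⟨u, hu, fun x y => by rw [hiu, heq (inner_mem_rangeIdeal x y)]⟩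
  · intro φ₁ φ₁' φ₂ φ₂' h1 h2 e1 e2 b hb
    simp only [StarAlgEquiv.trans_apply]
    calc φ₁ (φ₂ b) = φ₁' (φ₂ b) := e1 (mapsTo_rangeIdeal φ₂ h2 hb)
      _ = φ₁' (φ₂' b) := by rw [e2 hb]
  · intro φ φ' hφ hφ' heq b hb
    have hb' : φ.symm b ∈ rangeIdeal B E :=
      mapsTo_rangeIdeal φ.symm (hasGenUnitary_symm φ hφ) hb
    apply EquivLike.injective φ'
    rw [StarAlgEquiv.apply_symm_apply, ← heq hb', StarAlgEquiv.apply_symm_apply]
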